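/- Fix a real number a > 1 and let S be the projective hypersurface S = {(z,w) ∈ ℂ × ℂ : 1 + |z|² + |w|² = a·|1 + z² + w²|}. Then S is invariant under each of the following three one-parameter families of holomorphic transformations (t ∈ ℝ): (i) the rotations (z,w) ↦ (z·cos t − w·sin t, z·sin t + w·cos t); (ii) on the set where D := cos t − z·sin t ≠ 0, the maps (z,w) ↦ ( (z·cos t + sin t)/D, w/D ); (iii) on the set where D' := cos t − w·sin t ≠ 0, the maps (z,w) ↦ ( z/D', (w·cos t + sin t)/D' ). These are the flows of the vector fields −w∂_z + z∂_w, (1+z²)∂_z + zw∂_w, and zw∂_z + (1+w²)∂_w respectively. -/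

import Mathlib

open Complex

lemma trig_c (t : ℝ) : (Real.cos t : ℂ)^2 + (Real.sin t : ℂ)^2 = 1 := by
  have := Real.cos_sq_add_sin_sq t
  exact_mod_cast congrArg (Complex.ofReal) this

lemma mob_aux (a : ℝ) (t : ℝ) (z w : ℂ)
    (h : 1 + Complex.normSq z + Complex.normSq w = a * Norm.norm (1 + z ^ 2 + w ^ 2))
    (hD : (Real.cos t : ℂ) - z * (Real.sin t : ℂ) ≠ 0) :
    1 + Complex.normSq ((z * (Real.cos t : ℂ) + (Real.sin t : ℂ))
            / ((Real.cos t : ℂ) - z * (Real.sin t : ℂ)))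
        + Complex.normSq (w / ((Real.cos t : ℂ) - z * (Real.sin t : ℂ)))
      = a * Norm.norm (1
            + ((z * (Real.cos t : ℂ) + (Real.sin t : ℂ))
                / ((Real.cos t : ℂ) - z * (Real.sin t : ℂ))) ^ 2
            + (w / ((Real.cos t : ℂ) - z * (Real.sin t : ℂ))) ^ 2) := by
  set c : ℂ := (Real.cos t : ℂ) with hcdef
  set s : ℂ := (Real.sin t : ℂ) with hsdef
  have hc : c ^ 2 + s ^ 2 = 1 := trig_c t
  set D : ℂ := c - z * s with hDdef
  have hN : Complex.normSq D ≠ 0 := by simpa [Complex.normSq_eq_zero] using hD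
  have hNpos : 0 < Complex.normSq D := lt_of_le_of_ne (Complex.normSq_nonneg D) (Ne.symm hN)
  -- key real identity
  have key1 : Complex.normSq D + Complex.normSq (z * c + s) = 1 + Complex.normSq z := by
    have : ((Complex.normSq D : ℂ) + (Complex.normSq (z * c + s) : ℂ))
        = (1 : ℂ) + (Complex.normSq z : ℂ) := by
      rw [← Complex.mul_conj, ← Complex.mul_conj, ← Complex.mul_conj]
      have hcc : (starRingEnd ℂ) c = c := Complex.conj_ofReal _
      have hss : (starRingEnd ℂ) s = s := Complex.conj_ofReal _
      have hDc : (starRingEnd ℂ) D = c - (starRingEnd ℂ) z * s := by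
        rw [hDdef]; simp only [map_sub, map_mul, hcc, hss]
      simp only [map_sub, map_add, map_mul, hcc, hss, hDc, hDdef]
      linear_combination (1 + z * (starRingEnd ℂ) z) * hc
    exact_mod_cast this
  -- key complex identity
  have key2 : 1 + ((z * c + s) / D) ^ 2 + (w / D) ^ 2 = (1 + z ^ 2 + w ^ 2) / D ^ 2 := by
    field_simp
    linear_combination (1 + z ^ 2) * hc
  have habsD : Norm.norm (D ^ 2) = Complex.normSq D := by
    rw [norm_pow, Complex.sq_norm]
  calc 1 + Complex.normSq ((z * c + s) / D) + Complex.normSq (w / D)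
      = (Complex.normSq D + Complex.normSq (z * c + s) + Complex.normSq w)
          / Complex.normSq D := by
        rw [Complex.normSq_div, Complex.normSq_div]
        field_simp
    _ = (1 + Complex.normSq z + Complex.normSq w) / Complex.normSq D := by rw [key1]
    _ = a * Norm.norm (1 + z ^ 2 + w ^ 2) / Complex.normSq D := by rw [h]
    _ = a * Norm.norm ((1 + z ^ 2 + w ^ 2) / D ^ 2) := by
        rw [norm_div, habsD]; ring
    _ = a * Norm.norm (1 + ((z * c + s) / D) ^ 2 + (w / D) ^ 2) := by rw [key2]

theorem projective_p1_symmetry (a : ℝ) (ha : 1 < a) :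
    (∀ (t : ℝ) (z w : ℂ),
      1 + Complex.normSq z + Complex.normSq w
          = a * Norm.norm (1 + z ^ 2 + w ^ 2) →
      1 + Complex.normSq (z * (Real.cos t : ℂ) - w * (Real.sin t : ℂ))
          + Complex.normSq (z * (Real.sin t : ℂ) + w * (Real.cos t : ℂ))
        = a * Norm.norm (1 + (z * (Real.cos t : ℂ) - w * (Real.sin t : ℂ)) ^ 2
              + (z * (Real.sin t : ℂ) + w * (Real.cos t : ℂ)) ^ 2)) ∧
    (∀ (t : ℝ) (z w : ℂ),
      1 + Complex.normSq z + Complex.normSq w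
          = a * Norm.norm (1 + z ^ 2 + w ^ 2) →
      (Real.cos t : ℂ) - z * (Real.sin t : ℂ) ≠ 0 →
      1 + Complex.normSq ((z * (Real.cos t : ℂ) + (Real.sin t : ℂ))
              / ((Real.cos t : ℂ) - z * (Real.sin t : ℂ)))
          + Complex.normSq (w / ((Real.cos t : ℂ) - z * (Real.sin t : ℂ)))
        = a * Norm.norm (1
              + ((z * (Real.cos t : ℂ) + (Real.sin t : ℂ))
                  / ((Real.cos t : ℂ) - z * (Real.sin t : ℂ))) ^ 2
              + (w / ((Real.cos t : ℂ) - z * (Real.sin t : ℂ))) ^ 2)) ∧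
    (∀ (t : ℝ) (z w : ℂ),
      1 + Complex.normSq z + Complex.normSq w
          = a * Norm.norm (1 + z ^ 2 + w ^ 2) →
      (Real.cos t : ℂ) - w * (Real.sin t : ℂ) ≠ 0 →
      1 + Complex.normSq (z / ((Real.cos t : ℂ) - w * (Real.sin t : ℂ)))
          + Complex.normSq ((w * (Real.cos t : ℂ) + (Real.sin t : ℂ))
              / ((Real.cos t : ℂ) - w * (Real.sin t : ℂ)))
        = a * Norm.norm (1
              + (z / ((Real.cos t : ℂ) - w * (Real.sin t : ℂ))) ^ 2
              + ((w * (Real.cos t : ℂ) + (Real.sin t : ℂ))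
                  / ((Real.cos t : ℂ) - w * (Real.sin t : ℂ))) ^ 2)) := by
  refine ⟨?_, ?_, ?_⟩
  · intro t z w h
    set c : ℂ := (Real.cos t : ℂ)
    set s : ℂ := (Real.sin t : ℂ)
    have hc : c ^ 2 + s ^ 2 = 1 := trig_c t
    have key1 : Complex.normSq (z * c - w * s) + Complex.normSq (z * s + w * c)
        = Complex.normSq z + Complex.normSq w := by
      have : ((Complex.normSq (z * c - w * s) : ℂ) + (Complex.normSq (z * s + w * c) : ℂ))
          = (Complex.normSq z : ℂ) + (Complex.normSq w : ℂ) := by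
        rw [← Complex.mul_conj, ← Complex.mul_conj, ← Complex.mul_conj, ← Complex.mul_conj]
        have hcc : (starRingEnd ℂ) c = c := Complex.conj_ofReal _
        have hss : (starRingEnd ℂ) s = s := Complex.conj_ofReal _
        simp only [map_sub, map_add, map_mul, hcc, hss]
        linear_combination (z * (starRingEnd ℂ) z + w * (starRingEnd ℂ) w) * hc
      exact_mod_cast this
    have key2 : 1 + (z * c - w * s) ^ 2 + (z * s + w * c) ^ 2 = 1 + z ^ 2 + w ^ 2 := by
      linear_combination (z ^ 2 + w ^ 2) * hc
    rw [key2]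
    linarith [key1]
  · intro t z w h hD
    exact mob_aux a t z w h hD
  · intro t z w h hD
    have h' : 1 + Complex.normSq w + Complex.normSq z
        = a * Norm.norm (1 + w ^ 2 + z ^ 2) := by
      rw [show (1 : ℂ) + w ^ 2 + z ^ 2 = 1 + z ^ 2 + w ^ 2 by ring]
      linarith
    have := mob_aux a t w z h' hD
    rw [show 1 + (z / ((Real.cos t : ℂ) - w * (Real.sin t : ℂ))) ^ 2
        + ((w * (Real.cos t : ℂ) + (Real.sin t : ℂ))
            / ((Real.cos t : ℂ) - w * (Real.sin t : ℂ))) ^ 2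
        = 1 + ((w * (Real.cos t : ℂ) + (Real.sin t : ℂ))
            / ((Real.cos t : ℂ) - w * (Real.sin t : ℂ))) ^ 2
          + (z / ((Real.cos t : ℂ) - w * (Real.sin t : ℂ))) ^ 2 by ring]
    linarith
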